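/- A partial cube contains no induced subgraph isomorphic to the complete bipartite graph K_{2,3}. -/
import Mathlib


open SimpleGraph

/-- A partial cube: a connected graph admitting an isometric embedding into a hypercube,
i.e. an injective map to `{0,1}^n` such that Hamming distance equals graph distance. -/
def IsPartialCube {V : Type} (G : SimpleGraph V) : Prop :=
  G.Connected ∧ ∃ (n : ℕ) (f : V → (Fin n → Bool)),
    Function.Injective f ∧ ∀ u v : V, hammingDist (f u) (f v) = G.dist u v

open Finset in
lemma hamming_key {n : ℕ} {a b p : Fin n → Bool} (hab : hammingDist a b = 2)
    (hpa : hammingDist a p = 1) (hpb : hammingDist b p = 1) :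
    ∃ i, a i ≠ b i ∧ p = Function.update a i (b i) := by
  rw [hammingDist, card_eq_one] at hpa
  obtain ⟨i, hi⟩ := hpa
  have hpi : a i ≠ p i := by
    have : i ∈ ({i} : Finset (Fin n)) := mem_singleton_self i
    rw [← hi, mem_filter] at this
    exact this.2
  have hoff : ∀ j, j ≠ i → p j = a j := by
    intro j hj
    by_contra h
    have : j ∈ ({i} : Finset (Fin n)) := by
      rw [← hi, mem_filter]; exact ⟨mem_univ j, fun h' => h h'.symm⟩
    exact hj (mem_singleton.mp this)
  have hib : a i ≠ b i := by
    intro hEq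
    have hsub : insert i (univ.filter fun j => a j ≠ b j) ⊆
        (univ.filter fun j => b j ≠ p j) := by
      intro j hj
      rcases mem_insert.mp hj with rfl | hjf
      · rw [mem_filter]
        exact ⟨mem_univ j, hEq ▸ hpi⟩
      · rw [mem_filter] at hjf ⊢
        refine ⟨mem_univ j, ?_⟩
        have hji : j ≠ i := fun h => hjf.2 (h ▸ hEq)
        rw [hoff j hji]
        exact fun h => hjf.2 h.symm
    have hni : i ∉ (univ.filter fun j => a j ≠ b j) := by
      simp [hEq]
    have h3 : 3 ≤ (univ.filter fun j => b j ≠ p j).card := by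
      calc 3 = (insert i (univ.filter fun j => a j ≠ b j)).card := by
              rw [card_insert_of_notMem hni]
              rw [hammingDist] at hab; rw [hab]
        _ ≤ _ := card_le_card hsub
    rw [hammingDist] at hpb
    omega
  refine ⟨i, hib, ?_⟩
  funext j
  by_cases hj : j = i
  · subst hj
    rw [Function.update_self]
    revert hpi hib
    cases a j <;> cases b j <;> cases p j <;> simp
  · rw [Function.update_of_ne hj, hoff j hj]

theorem partialCube_no_induced_K23 {V : Type} (G : SimpleGraph V)
    (hG : IsPartialCube G) :
    IsEmpty (completeBipartiteGraph (Fin 2) (Fin 3) ↪g G) := by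
  obtain ⟨hconn, n, f, hf, hdist⟩ := hG
  constructor
  intro e
  set A := e (Sum.inl 0) with hA
  set B := e (Sum.inl 1) with hB
  have hinj := e.injective
  -- adjacency facts
  have hadj : ∀ i : Fin 3, G.Adj A (e (Sum.inr i)) ∧ G.Adj B (e (Sum.inr i)) := by
    intro i
    exact ⟨e.map_adj_iff.mpr (Or.inl ⟨rfl, rfl⟩), e.map_adj_iff.mpr (Or.inl ⟨rfl, rfl⟩)⟩
  have hAB_ne : A ≠ B := fun h => by simpa using hinj h
  have hAB_nadj : ¬ G.Adj A B := by
    intro h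
    have := e.map_adj_iff.mp h
    simp [completeBipartiteGraph] at this
  have hdAB : G.dist A B = 2 := by
    have h1 : G.dist A B ≠ 0 := fun h => hAB_ne (hconn.dist_eq_zero_iff.mp h)
    have h2 : G.dist A B ≠ 1 := fun h => hAB_nadj (SimpleGraph.dist_eq_one_iff_adj.mp h)
    have h3 : G.dist A B ≤ 2 := by
      have t1 : G.dist A (e (Sum.inr 0)) = 1 :=
        SimpleGraph.dist_eq_one_iff_adj.mpr (hadj 0).1
      have t2 : G.dist (e (Sum.inr 0)) B = 1 := by
        rw [SimpleGraph.dist_comm]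
        exact SimpleGraph.dist_eq_one_iff_adj.mpr (hadj 0).2
      have := hconn.dist_triangle (u := A) (v := e (Sum.inr 0)) (w := B)
      rw [t1, t2] at this
      omega
    omega
  -- hamming facts
  have key : ∀ i : Fin 3, ∃ k, f A k ≠ f B k ∧
      f (e (Sum.inr i)) = Function.update (f A) k (f B k) := by
    intro i
    apply hamming_key
    · rw [hdist]; exact hdAB
    · rw [hdist]; exact SimpleGraph.dist_eq_one_iff_adj.mpr (hadj i).1
    · rw [hdist]; exact SimpleGraph.dist_eq_one_iff_adj.mpr (hadj i).2
  obtain ⟨k0, hk0, he0⟩ := key 0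
  obtain ⟨k1, hk1, he1⟩ := key 1
  obtain ⟨k2, hk2, he2⟩ := key 2
  -- distinctness of k's
  have hne : ∀ (i j : Fin 3), i ≠ j → f (e (Sum.inr i)) ≠ f (e (Sum.inr j)) := by
    intro i j hij h
    exact hij (by simpa using hinj (hf h))
  have d01 : k0 ≠ k1 := fun h => hne 0 1 (by decide) (by rw [he0, he1, h])
  have d02 : k0 ≠ k2 := fun h => hne 0 2 (by decide) (by rw [he0, he2, h])
  have d12 : k1 ≠ k2 := fun h => hne 1 2 (by decide) (by rw [he1, he2, h])
  -- but the set of differing coordinates has card 2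
  have hcard : (Finset.univ.filter fun j => f A j ≠ f B j).card = 2 := by
    have := hdist A B
    rw [hdAB] at this
    exact this
  have hsub : ({k0, k1, k2} : Finset (Fin n)) ⊆
      (Finset.univ.filter fun j => f A j ≠ f B j) := by
    intro j hj
    simp only [Finset.mem_insert, Finset.mem_singleton] at hj
    rcases hj with rfl | rfl | rfl <;> simp [hk0, hk1, hk2]
  have h3 : ({k0, k1, k2} : Finset (Fin n)).card = 3 := by
    rw [Finset.card_insert_of_notMem (by simp [d01, d02]),
        Finset.card_insert_of_notMem (by simp [d12]),
        Finset.card_singleton]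
  have := Finset.card_le_card hsub
  omega
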